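/- For every linear order b with domain a subset of ℕ, the order b embeds into the Kleene–Brouwer ordering of the tree of finite strictly descending sequences through b. -/

import Mathlib

/-- Kleene–Brouwer ordering on finite sequences of elements of a subset of ℕ,
comparing entries as natural numbers. -/
def KBS (S : Set ℕ) (s t : List ↥S) : Prop :=
  ∃ n : ℕ, s.take n = t.take n ∧
    ((n = t.length ∧ n < s.length) ∨
      ∃ (h1 : n < s.length) (h2 : n < t.length),
        (s.get ⟨n, h1⟩ : ℕ) < (t.get ⟨n, h2⟩ : ℕ))

section Greedy

variable {S : Set ℕ} (r : ↥S → ↥S → Prop)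

/-- Keep condition at stage `n` for target `x`. -/
def keep (x : ↥S) (p : List ↥S) (n : ℕ) : Prop :=
  ∃ hn : n ∈ S, ¬ r ⟨n, hn⟩ x ∧ ∀ k ∈ p, r ⟨n, hn⟩ k

open Classical in
/-- Greedy scan: go through `0, 1, ..., m-1` and keep `n` if it is `≥` `x`
in the order `r` and below all previously kept elements. -/
noncomputable def greedy (x : ↥S) : ℕ → List ↥S
  | 0 => []
  | n + 1 =>
    if h : keep r x (greedy x n) n then greedy x n ++ [⟨n, h.choose⟩]
    else greedy x n

lemma greedy_succ_of_keep {x : ↥S} {n : ℕ} (h : keep r x (greedy r x n) n) :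
    ∃ w : ↥S, (w : ℕ) = n ∧ ¬ r w x ∧ (∀ k ∈ greedy r x n, r w k) ∧
      greedy r x (n + 1) = greedy r x n ++ [w] := by
  rw [greedy, dif_pos h]
  exact ⟨⟨n, h.choose⟩, rfl, h.choose_spec.1, h.choose_spec.2, rfl⟩

lemma greedy_succ_of_not_keep {x : ↥S} {n : ℕ} (h : ¬ keep r x (greedy r x n) n) :
    greedy r x (n + 1) = greedy r x n := by
  rw [greedy, dif_neg h]

lemma greedy_mem_lt {x : ↥S} {m : ℕ} {k : ↥S} (hk : k ∈ greedy r x m) : (k : ℕ) < m := by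
  induction m with
  | zero => simp [greedy] at hk
  | succ n ih =>
    by_cases h : keep r x (greedy r x n) n
    · obtain ⟨w, hw, -, -, he⟩ := greedy_succ_of_keep r h
      rw [he] at hk
      rcases List.mem_append.1 hk with h' | h'
      · exact (ih h').trans (Nat.lt_succ_self n)
      · simp at h'; subst h'; omega
    · rw [greedy_succ_of_not_keep r h] at hk
      exact (ih hk).trans (Nat.lt_succ_self n)

lemma greedy_mem_not_r {x : ↥S} {m : ℕ} {k : ↥S} (hk : k ∈ greedy r x m) : ¬ r k x := by
  induction m with
  | zero => simp [greedy] at hk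
  | succ n ih =>
    by_cases h : keep r x (greedy r x n) n
    · obtain ⟨w, -, hwr, -, he⟩ := greedy_succ_of_keep r h
      rw [he] at hk
      rcases List.mem_append.1 hk with h' | h'
      · exact ih h'
      · simp at h'; subst h'; exact hwr
    · rw [greedy_succ_of_not_keep r h] at hk
      exact ih hk

lemma greedy_pairwise (x : ↥S) (m : ℕ) :
    (greedy r x m).Pairwise (fun a c => r c a) := by
  induction m with
  | zero => simp [greedy]
  | succ n ih =>
    by_cases h : keep r x (greedy r x n) n
    · obtain ⟨w, -, -, hall, he⟩ := greedy_succ_of_keep r h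
      rw [he]
      refine List.pairwise_append.2 ⟨ih, List.pairwise_singleton _ _, ?_⟩
      intro a ha c hc
      simp at hc; subst hc
      exact hall a ha
    · rw [greedy_succ_of_not_keep r h]; exact ih

variable (hr : IsStrictTotalOrder ↥S r)
include hr

lemma greedy_keep_self (x : ↥S) : keep r x (greedy r x (x : ℕ)) (x : ℕ) := by
  refine ⟨x.2, ?_, ?_⟩
  · have hx : (⟨(x : ℕ), x.2⟩ : ↥S) = x := rfl
    rw [hx]; exact hr.irrefl x
  · intro k hk
    have h1 : (k : ℕ) < (x : ℕ) := greedy_mem_lt r hk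
    have h2 : ¬ r k x := greedy_mem_not_r r hk
    have hx : (⟨(x : ℕ), x.2⟩ : ↥S) = x := rfl
    rw [hx]
    rcases (show r x k ∨ x = k ∨ r k x from (em (r x k)).elim Or.inl fun h3 => (em (r k x)).elim (fun h4 => Or.inr (Or.inr h4)) fun h4 => Or.inr (Or.inl (hr.trichotomous x k h3 h4))) with h | h | h
    · exact h
    · exact absurd (congrArg Subtype.val h) (Nat.ne_of_gt h1)
    · exact absurd h h2

lemma self_mem_greedy (x : ↥S) : x ∈ greedy r x ((x : ℕ) + 1) := by
  obtain ⟨w, hw, -, -, he⟩ := greedy_succ_of_keep r (greedy_keep_self r hr x)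
  have : w = x := Subtype.ext hw
  rw [he, this]; simp

lemma greedy_stable (x : ↥S) {m : ℕ} (hm : (x : ℕ) + 1 ≤ m) :
    greedy r x m = greedy r x ((x : ℕ) + 1) := by
  induction m with
  | zero => omega
  | succ n ih =>
    rcases Nat.lt_or_ge n ((x : ℕ) + 1) with h | h
    · have : n + 1 = (x : ℕ) + 1 := by omega
      rw [this]
    · have heq := ih h
      have hk : ¬ keep r x (greedy r x n) n := by
        rintro ⟨hns, hnr, hall⟩
        have hx : x ∈ greedy r x n := by
          rw [heq]; exact self_mem_greedy r hr x
        exact hnr (hall x hx)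
      rw [greedy_succ_of_not_keep r hk, heq]

/-- The key invariant comparing the two greedy scans. -/
lemma greedy_compare {x y : ↥S} (hxy : r x y) (m : ℕ) :
    greedy r x m = greedy r y m ∨
      ∃ (p : List ↥S) (a : ↥S) (u v : List ↥S),
        greedy r x m = p ++ a :: u ∧ greedy r y m = p ++ v ∧
          ∀ c ∈ v, (a : ℕ) < (c : ℕ) := by
  induction m with
  | zero => left; rfl
  | succ n ih =>
    rcases ih with heq | ⟨p, a, u, v, hgx, hgy, hv⟩
    · by_cases hy : keep r y (greedy r y n) n
      · -- then x keeps too, lists stay equal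
        have hx : keep r x (greedy r x n) n := by
          rcases hy with ⟨hn, hnr, hall⟩
          refine ⟨hn, ?_, ?_⟩
          · intro hrx; exact hnr (hr.trans _ _ _ hrx hxy)
          · rw [heq]; exact hall
        obtain ⟨wx, hwx, -, -, hex⟩ := greedy_succ_of_keep r hx
        obtain ⟨wy, hwy, -, -, hey⟩ := greedy_succ_of_keep r hy
        have hww : wx = wy := Subtype.ext (by rw [hwx, hwy])
        left
        rw [hex, hey, heq, hww]
      · by_cases hx : keep r x (greedy r x n) n
        · obtain ⟨wx, hwx, -, -, hex⟩ := greedy_succ_of_keep r hx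
          right
          refine ⟨greedy r y n, wx, [], [], ?_, ?_, by simp⟩
          · rw [hex, heq]
          · rw [greedy_succ_of_not_keep r hy]; simp
        · left
          rw [greedy_succ_of_not_keep r hx, greedy_succ_of_not_keep r hy, heq]
    · right
      have ha : a ∈ greedy r x n := by rw [hgx]; simp
      have han : (a : ℕ) < n := greedy_mem_lt r ha
      have hx' : ∃ u', greedy r x (n + 1) = p ++ a :: u' := by
        by_cases h : keep r x (greedy r x n) n
        · obtain ⟨wx, -, -, -, hex⟩ := greedy_succ_of_keep r h
          exact ⟨u ++ [wx], by rw [hex, hgx]; simp⟩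
        · exact ⟨u, by rw [greedy_succ_of_not_keep r h]; exact hgx⟩
      have hy' : ∃ v', greedy r y (n + 1) = p ++ v' ∧ ∀ c ∈ v', (a : ℕ) < (c : ℕ) := by
        by_cases h : keep r y (greedy r y n) n
        · obtain ⟨wy, hwy, -, -, hey⟩ := greedy_succ_of_keep r h
          refine ⟨v ++ [wy], by rw [hey, hgy]; simp, ?_⟩
          intro c hc
          rcases List.mem_append.1 hc with h' | h'
          · exact hv c h'
          · simp at h'; subst h'; omega
        · exact ⟨v, by rw [greedy_succ_of_not_keep r h]; exact hgy, hv⟩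
      obtain ⟨u', hu'⟩ := hx'
      obtain ⟨v', hv', hav⟩ := hy'
      exact ⟨p, a, u', v', hu', hv', hav⟩

end Greedy

/-- Every linear order `b` with domain a subset of ℕ embeds into the
Kleene–Brouwer ordering of the tree of finite strictly `b`-descending
sequences. -/
theorem embeds_into_KB_of_descending_tree (S : Set ℕ) (r : ↥S → ↥S → Prop)
    (hr : IsStrictTotalOrder ↥S r) :
    ∃ e : ↥S → {l : List ↥S // l.Pairwise (fun x y => r y x)},
      ∀ x y : ↥S, r x y → KBS S (e x).1 (e y).1 := by
  refine ⟨fun x => ⟨greedy r x ((x : ℕ) + 1), greedy_pairwise r x _⟩, ?_⟩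
  intro x y hxy
  simp only
  set N : ℕ := (x : ℕ) + (y : ℕ) + 2 with hN
  have hsx : greedy r x N = greedy r x ((x : ℕ) + 1) :=
    greedy_stable r hr x (by omega)
  have hsy : greedy r y N = greedy r y ((y : ℕ) + 1) :=
    greedy_stable r hr y (by omega)
  rcases greedy_compare r hr hxy N with heq | ⟨p, a, u, v, hgx, hgy, hv⟩
  · exfalso
    have hxmem : x ∈ greedy r y ((y : ℕ) + 1) := by
      rw [← hsy, ← heq, hsx]; exact self_mem_greedy r hr x
    exact greedy_mem_not_r r hxmem hxy
  · rw [← hsx, ← hsy]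
    rcases v with _ | ⟨c, v'⟩
    · -- greedy y N = p, greedy x N properly extends it
      refine ⟨p.length, ?_, Or.inl ⟨?_, ?_⟩⟩
      · rw [hgx, hgy]; simp
      · rw [hgy]; simp
      · rw [hgx]; simp
    · refine ⟨p.length, ?_, Or.inr ⟨by rw [hgx]; simp, by rw [hgy]; simp, ?_⟩⟩
      · rw [hgx, hgy]; simp
      · have e1 : (greedy r x N).get ⟨p.length, by rw [hgx]; simp⟩ = a := by
          simp only [List.get_eq_getElem]
          rw [List.getElem_of_eq hgx]
          rw [List.getElem_append_right (le_refl _)]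
          simp
        have e2 : (greedy r y N).get ⟨p.length, by rw [hgy]; simp⟩ = c := by
          simp only [List.get_eq_getElem]
          rw [List.getElem_of_eq hgy]
          rw [List.getElem_append_right (le_refl _)]
          simp
        rw [e1, e2]
        exact hv c (by simp)
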